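/- The number of partitions of n into distinct parts with k odd parts equals the number of partitions of n into odd parts such that exactly k different parts occur with odd multiplicity. -/

import Mathlib

open Nat

/-- The parts of a partition listed in nonincreasing order. -/
def sortedParts {n : ℕ} (p : n.Partition) : List ℕ := (p.parts.sort (· ≤ ·)).reverse

/-- `lo p` is the number of odd parts of `p` (with multiplicity). -/
def lo {n : ℕ} (p : n.Partition) : ℕ := (p.parts.filter (fun i => i % 2 = 1)).card

/-- `la p` is the alternating sum `λ₁ - λ₂ + λ₃ - ⋯` of the partition `p`. -/
def la {n : ℕ} (p : n.Partition) : ℤ :=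
  ∑ i ∈ Finset.range (sortedParts p).length, (-1 : ℤ) ^ i * ((sortedParts p).getD i 0 : ℤ)

/-- `nd p` is the number of distinct part-values of `p`. -/
def nd {n : ℕ} (p : n.Partition) : ℕ := p.parts.toFinset.card

/-- `no p` is the number of distinct part-values of `p` occurring with odd multiplicity. -/
def no {n : ℕ} (p : n.Partition) : ℕ :=
  (p.parts.toFinset.filter (fun a => p.parts.count a % 2 = 1)).card

/-- `nc p` is the number of chains (maximal runs of consecutive integers) of a
partition with distinct parts: parts `i` such that `i+1` is not a part. -/
def nc {n : ℕ} (p : n.Partition) : ℕ :=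
  (p.parts.toFinset.filter (fun i => i + 1 ∉ p.parts)).card

/-- `r2 p` is the number of parts of `p` congruent to 2 mod 4. -/
def r2 {n : ℕ} (p : n.Partition) : ℕ := (p.parts.filter (fun i => i % 4 = 2)).card

/-- Only even parts may be repeated. -/
def onlyEvenRepeats {n : ℕ} (p : n.Partition) : Prop :=
  ∀ i, 1 < p.parts.count i → 2 ∣ i

/-- Successive parts differ by at most 4, strictly less than 4 if either part is even,
and the smallest part is less than 4 (the class 𝒜₁ of Chen–Gao–Ji–Li). -/
def A1cond {n : ℕ} (p : n.Partition) : Prop :=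
  onlyEvenRepeats p ∧
  (∀ j, j + 1 < (sortedParts p).length →
    (sortedParts p).getD j 0 ≤ (sortedParts p).getD (j + 1) 0 + 4 ∧
    ((2 ∣ (sortedParts p).getD j 0 ∨ 2 ∣ (sortedParts p).getD (j + 1) 0) →
      (sortedParts p).getD j 0 < (sortedParts p).getD (j + 1) 0 + 4)) ∧
  (sortedParts p).getD ((sortedParts p).length - 1) 0 < 4

/-- No part divisible by 4 and only even parts repeated (the class 𝒜₂). -/
def A2cond {n : ℕ} (p : n.Partition) : Prop :=
  (∀ i ∈ p.parts, ¬ (4 ∣ i)) ∧ onlyEvenRepeats p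

/-- `loConj p` is the number of odd parts of the conjugate partition of `p`. -/
def loConj {n : ℕ} (p : n.Partition) : ℕ :=
  ((Finset.Icc 1 n).filter (fun i => (p.parts.filter (fun j => i ≤ j)).card % 2 = 1)).card

namespace GlaisherAux

/-- 2-adic valuation. -/
def v (i : ℕ) : ℕ := i.factorization 2

/-- odd part. -/
def oc (i : ℕ) : ℕ := ordCompl[2] i

lemma pow_mul_oc {i : ℕ} : 2 ^ v i * oc i = i :=
  Nat.ordProj_mul_ordCompl_eq_self i 2

lemma oc_pos {i : ℕ} (hi : i ≠ 0) : 0 < oc i := Nat.ordCompl_pos 2 hi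

lemma oc_odd {i : ℕ} (hi : i ≠ 0) : oc i % 2 = 1 :=
  Nat.two_dvd_ne_zero.mp (Nat.not_dvd_ordCompl Nat.prime_two hi)

lemma v_pow_mul {m : ℕ} (hm : m % 2 = 1) (j : ℕ) : v (2 ^ j * m) = j := by
  have hm0 : m ≠ 0 := by omega
  have h2 : ¬ (2 ∣ m) := by omega
  unfold v
  rw [Nat.factorization_mul (pow_ne_zero j two_ne_zero) hm0]
  simp [Nat.Prime.factorization_pow Nat.prime_two,
    Nat.factorization_eq_zero_of_not_dvd h2]

lemma oc_pow_mul {m : ℕ} (hm : m % 2 = 1) (j : ℕ) : oc (2 ^ j * m) = m := by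
  unfold oc
  rw [show (2 ^ j * m).factorization 2 = j from v_pow_mul hm j]
  exact Nat.mul_div_cancel_left m (pow_pos two_pos j)

lemma eq_of_v_oc {i i' : ℕ} (hv : v i = v i') (ho : oc i = oc i') : i = i' := by
  rw [← @pow_mul_oc i, ← @pow_mul_oc i', hv, ho]

lemma v_eq_zero_of_odd {m : ℕ} (hm : m % 2 = 1) : v m = 0 := by
  have : (2:ℕ) ^ 0 * m = m := by ring
  calc v m = v (2 ^ 0 * m) := by rw [this]
    _ = 0 := v_pow_mul hm 0

lemma oc_eq_self_of_odd {m : ℕ} (hm : m % 2 = 1) : oc m = m := by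
  have : (2:ℕ) ^ 0 * m = m := by ring
  calc oc m = oc (2 ^ 0 * m) := by rw [this]
    _ = m := oc_pow_mul hm 0

lemma zero_mem_bitIndices {c : ℕ} : 0 ∈ c.bitIndices ↔ c % 2 = 1 := by
  rcases Nat.even_or_odd c with ⟨q, hq⟩ | ⟨q, hq⟩
  · subst hq
    rw [show q + q = 2 * q by ring, Nat.bitIndices_two_mul]
    simp only [List.mem_map]
    constructor
    · rintro ⟨a, _, ha⟩; omega
    · omega
  · subst hq
    rw [Nat.bitIndices_two_mul_add_one]
    simp only [List.mem_cons]
    constructor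
    · intro _; omega
    · intro _; exact Or.inl trivial

/-- The Glaisher map on multisets: replace each part `2^a * m` (`m` odd) by
`2^a` copies of `m`. -/
def glMap (s : Multiset ℕ) : Multiset ℕ :=
  s.bind fun i => Multiset.replicate (2 ^ v i) (oc i)

lemma glMap_sum {s : Multiset ℕ} : (glMap s).sum = s.sum := by
  unfold glMap
  rw [Multiset.sum_bind]
  have h : s.map (fun i => (Multiset.replicate (2 ^ v i) (oc i)).sum) = s.map id :=
    Multiset.map_congr rfl fun i _ => by
      rw [Multiset.sum_replicate, smul_eq_mul, pow_mul_oc, id_eq]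
  rw [h, Multiset.map_id]

lemma mem_glMap {s : Multiset ℕ} {m : ℕ} : m ∈ glMap s ↔ ∃ i ∈ s, oc i = m := by
  unfold glMap
  rw [Multiset.mem_bind]
  refine exists_congr fun i => and_congr_right fun _ => ?_
  rw [Multiset.mem_replicate]
  constructor
  · rintro ⟨-, rfl⟩; rfl
  · rintro rfl; exact ⟨pow_ne_zero _ two_ne_zero, rfl⟩

lemma glMap_count (s : Multiset ℕ) (m : ℕ) :
    (glMap s).count m = (s.map fun i => if oc i = m then 2 ^ v i else 0).sum := by
  unfold glMap
  rw [Multiset.count_bind]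
  congr 1
  refine Multiset.map_congr rfl fun i _ => ?_
  rw [Multiset.count_replicate]

lemma count_glMap_nodup {s : Multiset ℕ} (hs : s.Nodup) (m : ℕ) :
    (glMap s).count m = ∑ i ∈ s.toFinset.filter (fun i => oc i = m), 2 ^ v i := by
  rw [glMap_count, Finset.sum_multiset_map_count, Finset.sum_filter]
  refine Finset.sum_congr rfl fun i hi => ?_
  rw [Multiset.count_eq_one_of_mem hs (Multiset.mem_toFinset.mp hi), one_smul]

lemma count_glMap_odd {s : Multiset ℕ} (hs : s.Nodup) (hpos : ∀ i ∈ s, i ≠ 0) (m : ℕ) :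
    (glMap s).count m % 2 = 1 ↔ m ∈ s ∧ m % 2 = 1 := by
  rw [count_glMap_nodup hs, Finset.sum_nat_mod]
  have h1 : ∀ i ∈ s.toFinset.filter (fun i => oc i = m),
      2 ^ v i % 2 = if v i = 0 then 1 else 0 := by
    intro i _
    rcases Nat.eq_zero_or_pos (v i) with h | h
    · simp [h]
    · rw [if_neg h.ne']
      have h2 : (2:ℕ) ∣ 2 ^ v i := dvd_pow_self 2 h.ne'
      omega
  rw [Finset.sum_congr rfl h1, Finset.sum_boole]
  have hset : (s.toFinset.filter (fun i => oc i = m)).filter (fun i => v i = 0) =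
      if m ∈ s ∧ m % 2 = 1 then {m} else ∅ := by
    ext i
    simp only [Finset.mem_filter, Multiset.mem_toFinset]
    constructor
    · rintro ⟨⟨his, hoc⟩, hv⟩
      have him : i = m := by
        rw [← hoc]
        calc i = 2 ^ v i * oc i := pow_mul_oc.symm
          _ = oc i := by rw [hv, pow_zero, one_mul]
      subst him
      have hodd : i % 2 = 1 := by
        by_contra hne
        have h2 : (2:ℕ) ∣ i := by omega
        have hp := Nat.Prime.factorization_pos_of_dvd Nat.prime_two (hpos i his) h2
        have hvv : v i = i.factorization 2 := rfl
        omega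
      rw [if_pos ⟨his, hodd⟩]
      simp
    · intro hi
      by_cases h : m ∈ s ∧ m % 2 = 1
      · rw [if_pos h] at hi
        simp only [Finset.mem_singleton] at hi
        subst hi
        exact ⟨⟨h.1, oc_eq_self_of_odd h.2⟩, v_eq_zero_of_odd h.2⟩
      · rw [if_neg h] at hi
        simp at hi
  rw [hset]
  by_cases h : m ∈ s ∧ m % 2 = 1 <;> simp [h]

lemma count_glMap_as_geomSum {s : Multiset ℕ} (hs : s.Nodup) (hpos : ∀ i ∈ s, i ≠ 0) (m : ℕ) :
    (glMap s).count m =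
      ∑ e ∈ (s.toFinset.filter (fun i => oc i = m)).image v, 2 ^ e := by
  rw [count_glMap_nodup hs]
  rw [Finset.sum_image]
  intro i hi j hj hv
  simp only [Finset.mem_coe, Finset.mem_filter, Multiset.mem_toFinset] at hi hj
  exact eq_of_v_oc hv (hi.2.trans hj.2.symm)

lemma glMap_injOn {s t : Multiset ℕ} (hs : s.Nodup) (ht : t.Nodup)
    (hspos : ∀ i ∈ s, i ≠ 0) (htpos : ∀ i ∈ t, i ≠ 0)
    (h : glMap s = glMap t) : s = t := by
  have key : ∀ s t : Multiset ℕ, s.Nodup → t.Nodup → (∀ i ∈ s, i ≠ 0) → (∀ i ∈ t, i ≠ 0) →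
      glMap s = glMap t → ∀ i ∈ s, i ∈ t := by
    intro s t hs ht hspos htpos h i hi
    set m := oc i with hm
    have hcount : (glMap s).count m = (glMap t).count m := by rw [h]
    rw [count_glMap_as_geomSum hs hspos, count_glMap_as_geomSum ht htpos] at hcount
    have hE := Finset.geomSum_injective (le_refl 2) hcount
    have hvi : v i ∈ (s.toFinset.filter (fun j => oc j = m)).image v :=
      Finset.mem_image_of_mem v (Finset.mem_filter.mpr ⟨Multiset.mem_toFinset.mpr hi, rfl⟩)
    rw [hE] at hvi
    obtain ⟨j, hj, hvj⟩ := Finset.mem_image.mp hvi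
    simp only [Finset.mem_filter, Multiset.mem_toFinset] at hj
    have : j = i := eq_of_v_oc hvj hj.2
    rw [← this]; exact hj.1
  rw [hs.ext ht]
  exact fun i => ⟨key s t hs ht hspos htpos h i, key t s ht hs htpos hspos h.symm i⟩

/-- Inverse of the Glaisher map: expand each multiplicity in binary. -/
def glInv (t : Multiset ℕ) : Multiset ℕ :=
  t.toFinset.val.bind fun m => ((t.count m).bitIndices.map fun j => 2 ^ j * m : List ℕ)

lemma mem_glInv {t : Multiset ℕ} {x : ℕ} :
    x ∈ glInv t ↔ ∃ m ∈ t, ∃ j ∈ (t.count m).bitIndices, x = 2 ^ j * m := by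
  unfold glInv
  rw [Multiset.mem_bind]
  constructor
  · rintro ⟨m, hm, hx⟩
    rw [Multiset.mem_coe, List.mem_map] at hx
    obtain ⟨j, hj, rfl⟩ := hx
    exact ⟨m, Multiset.mem_toFinset.mp (by exact hm), j, hj, rfl⟩
  · rintro ⟨m, hm, j, hj, rfl⟩
    exact ⟨m, by exact Multiset.mem_toFinset.mpr hm, by
      rw [Multiset.mem_coe, List.mem_map]; exact ⟨j, hj, rfl⟩⟩

lemma glInv_pos {t : Multiset ℕ} (hpos : ∀ m ∈ t, m ≠ 0) {x : ℕ} (hx : x ∈ glInv t) :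
    x ≠ 0 := by
  obtain ⟨m, hm, j, _, rfl⟩ := mem_glInv.mp hx
  exact Nat.mul_ne_zero (pow_ne_zero _ two_ne_zero) (hpos m hm)

lemma glInv_sum {t : Multiset ℕ} : (glInv t).sum = t.sum := by
  unfold glInv
  rw [Multiset.sum_bind]
  have h1 : ∀ m : ℕ, (((t.count m).bitIndices.map fun j => 2 ^ j * m : List ℕ) :
      Multiset ℕ).sum = t.count m * m := by
    intro m
    rw [Multiset.sum_coe, List.sum_map_mul_right, Nat.twoPowSum_bitIndices]
  calc (t.toFinset.val.map fun m =>
        (((t.count m).bitIndices.map fun j => 2 ^ j * m : List ℕ) : Multiset ℕ).sum).sum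
      = (t.toFinset.val.map fun m => t.count m * m).sum := by
        exact congrArg _ (Multiset.map_congr rfl fun m _ => h1 m)
    _ = ∑ m ∈ t.toFinset, t.count m * m := rfl
    _ = t.sum := by
        rw [Finset.sum_multiset_count t]
        simp [smul_eq_mul]

lemma glInv_nodup {t : Multiset ℕ} (hodd : ∀ m ∈ t, m % 2 = 1) : (glInv t).Nodup := by
  unfold glInv
  rw [Multiset.nodup_bind]
  constructor
  · intro m hm
    rw [Multiset.coe_nodup]
    refine List.Nodup.map ?_ Nat.bitIndices_sorted.nodup
    intro a b hab
    have hm' : m ≠ 0 := by have := hodd m (Multiset.mem_toFinset.mp hm); omega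
    simp only at hab
    exact Nat.pow_right_injective (le_refl 2) (Nat.eq_of_mul_eq_mul_right
      (Nat.pos_of_ne_zero hm') hab)
  · refine Multiset.Nodup.pairwise ?_ t.toFinset.nodup
    intro a ha b hb hab
    rw [Function.onFun, Multiset.disjoint_left]
    intro x hx hx'
    rw [Multiset.mem_coe, List.mem_map] at hx hx'
    obtain ⟨j, _, rfl⟩ := hx
    obtain ⟨j', _, hj'⟩ := hx'
    have ha' := hodd a (Multiset.mem_toFinset.mp ha)
    have hb' := hodd b (Multiset.mem_toFinset.mp hb)
    apply hab
    calc a = oc (2 ^ j * a) := (oc_pow_mul ha' j).symm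
      _ = oc (2 ^ j' * b) := by rw [hj']
      _ = b := oc_pow_mul hb' j'

lemma glMap_glInv {t : Multiset ℕ} (hodd : ∀ m ∈ t, m % 2 = 1) : glMap (glInv t) = t := by
  ext m'
  rw [glMap_count]
  unfold glInv
  rw [Multiset.map_bind, Multiset.sum_bind]
  have h1 : ∀ m ∈ t.toFinset.val,
      ((((t.count m).bitIndices.map fun j => 2 ^ j * m : List ℕ) : Multiset ℕ).map
        fun i => if oc i = m' then 2 ^ v i else 0).sum
      = if m = m' then t.count m else 0 := by
    intro m hm
    have hm' := hodd m (Multiset.mem_toFinset.mp (by exact hm))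
    rw [Multiset.map_coe, Multiset.sum_coe, List.map_map]
    have h2 : ∀ j ∈ (t.count m).bitIndices,
        ((fun i => if oc i = m' then 2 ^ v i else 0) ∘ fun j => 2 ^ j * m) j
        = if m = m' then 2 ^ j else 0 := by
      intro j _
      simp only [Function.comp_apply, oc_pow_mul hm', v_pow_mul hm']
    rw [List.map_congr_left h2]
    by_cases h : m = m'
    · rw [if_pos h]
      have h3 : ((t.count m).bitIndices.map fun j => if m = m' then 2 ^ j else 0) =
          (t.count m).bitIndices.map fun j => 2 ^ j :=
        List.map_congr_left fun j _ => if_pos h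
      rw [h3, Nat.twoPowSum_bitIndices]
    · rw [if_neg h]
      have h3 : ((t.count m).bitIndices.map fun j => if m = m' then 2 ^ j else 0) =
          (t.count m).bitIndices.map fun _ => (0:ℕ) :=
        List.map_congr_left fun j _ => if_neg h
      rw [h3]
      simp
  rw [Multiset.map_congr rfl h1]
  have h4 : (t.toFinset.val.map fun m => if m = m' then t.count m else 0).sum
      = ∑ m ∈ t.toFinset, if m = m' then t.count m else 0 := rfl
  rw [h4, Finset.sum_ite_eq' t.toFinset m' (fun m => t.count m)]
  by_cases hm : m' ∈ t.toFinset
  · rw [if_pos hm]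
  · rw [if_neg hm, eq_comm, Multiset.count_eq_zero]
    exact fun h => hm (Multiset.mem_toFinset.mpr h)

lemma filter_odd_eq {s : Multiset ℕ} (hs : s.Nodup) (hpos : ∀ i ∈ s, i ≠ 0) :
    (glMap s).toFinset.filter (fun m => (glMap s).count m % 2 = 1)
      = s.toFinset.filter (fun m => m % 2 = 1) := by
  ext m
  simp only [Finset.mem_filter, Multiset.mem_toFinset]
  constructor
  · rintro ⟨_, hc⟩
    exact (count_glMap_odd hs hpos m).mp hc
  · rintro ⟨hms, hm⟩
    have hc := (count_glMap_odd hs hpos m).mpr ⟨hms, hm⟩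
    refine ⟨?_, hc⟩
    rw [← Multiset.count_pos]
    omega

/-- The Glaisher map on partitions. -/
def glPart {n : ℕ} (p : n.Partition) : n.Partition where
  parts := glMap p.parts
  parts_pos := fun hi => by
    obtain ⟨j, hj, rfl⟩ := mem_glMap.mp hi
    exact oc_pos (p.parts_pos hj).ne'
  parts_sum := by rw [glMap_sum, p.parts_sum]

lemma glPart_parts {n : ℕ} (p : n.Partition) : (glPart p).parts = glMap p.parts := rfl

lemma glPart_odd {n : ℕ} (p : n.Partition) : ∀ i ∈ (glPart p).parts, Odd i := by
  intro i hi
  obtain ⟨j, hj, rfl⟩ := mem_glMap.mp hi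
  exact Nat.odd_iff.mpr (oc_odd (p.parts_pos hj).ne')

lemma no_glPart {n : ℕ} (p : n.Partition) (hnd : p.parts.Nodup) : no (glPart p) = lo p := by
  unfold no lo
  have hpos : ∀ i ∈ p.parts, i ≠ 0 := fun i hi => (p.parts_pos hi).ne'
  rw [glPart_parts, filter_odd_eq hnd hpos, ← Multiset.toFinset_filter,
    Multiset.toFinset_card_of_nodup (hnd.filter _)]

/-- The inverse Glaisher map on partitions. -/
def glInvPart {n : ℕ} (q : n.Partition) : n.Partition where
  parts := glInv q.parts
  parts_pos := fun hi =>
    Nat.pos_of_ne_zero (glInv_pos (fun m hm => (q.parts_pos hm).ne') hi)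
  parts_sum := by rw [glInv_sum, q.parts_sum]

lemma glInvPart_parts {n : ℕ} (q : n.Partition) : (glInvPart q).parts = glInv q.parts := rfl

lemma lo_glInvPart {n : ℕ} (q : n.Partition) (hodd : ∀ i ∈ q.parts, i % 2 = 1) :
    lo (glInvPart q) = no q := by
  unfold lo no
  have hnd : (glInv q.parts).Nodup := glInv_nodup hodd
  have hpos : ∀ i ∈ glInv q.parts, i ≠ 0 :=
    fun i hi => glInv_pos (fun m hm => (q.parts_pos hm).ne') hi
  have hmg : glMap (glInv q.parts) = q.parts := glMap_glInv hodd
  rw [glInvPart_parts, ← Multiset.toFinset_card_of_nodup (hnd.filter _),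
    Multiset.toFinset_filter]
  congr 1
  ext m
  simp only [Finset.mem_filter, Multiset.mem_toFinset]
  constructor
  · rintro ⟨hm, hmo⟩
    have hc := (count_glMap_odd hnd hpos m).mpr ⟨hm, hmo⟩
    rw [hmg] at hc
    refine ⟨?_, hc⟩
    rw [← Multiset.count_pos]
    omega
  · rintro ⟨_, hc⟩
    have hc' : (glMap (glInv q.parts)).count m % 2 = 1 := by rw [hmg]; exact hc
    exact ⟨((count_glMap_odd hnd hpos m).mp hc').1, ((count_glMap_odd hnd hpos m).mp hc').2⟩

end GlaisherAux

theorem glaisher_refinement (n k : ℕ) :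
    Nat.card {p : n.Partition // p.parts.Nodup ∧ lo p = k} =
      Nat.card {p : n.Partition // (∀ i ∈ p.parts, Odd i) ∧ no p = k} := by
  apply Nat.card_eq_of_bijective
    (f := fun p : {p : n.Partition // p.parts.Nodup ∧ lo p = k} =>
      (⟨GlaisherAux.glPart p.1,
        GlaisherAux.glPart_odd p.1,
        by rw [GlaisherAux.no_glPart p.1 p.2.1, p.2.2]⟩ :
        {p : n.Partition // (∀ i ∈ p.parts, Odd i) ∧ no p = k}))
  constructor
  · rintro ⟨p, hp⟩ ⟨p', hp'⟩ h
    simp only [Subtype.mk.injEq] at h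
    apply Subtype.ext
    apply Nat.Partition.ext
    exact GlaisherAux.glMap_injOn hp.1 hp'.1 (fun i hi => (p.parts_pos hi).ne')
      (fun i hi => (p'.parts_pos hi).ne') (congrArg Nat.Partition.parts h)
  · rintro ⟨q, hq, hno⟩
    have hodd : ∀ i ∈ q.parts, i % 2 = 1 := fun i hi => Nat.odd_iff.mp (hq i hi)
    refine ⟨⟨GlaisherAux.glInvPart q, GlaisherAux.glInv_nodup hodd, ?_⟩, ?_⟩
    · rw [GlaisherAux.lo_glInvPart q hodd]; exact hno
    · apply Subtype.ext
      apply Nat.Partition.ext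
      exact GlaisherAux.glMap_glInv hodd
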